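/- Let V be a real Hilbert space, Ũ a closed subspace of V, U a finite-dimensional subspace with U ⊆ Ũ, P_U the orthogonal projection of V onto U, and P a projection onto U along a space of functionals W contained in the continuous dual of Ũ. Let c denote the operator norm of (P − P_U) restricted to Ũ. Then for every v ∈ Ũ, ‖v − P v‖² = ‖v − P_U v‖² + ‖P_U v − P v‖², and consequently ‖v − P v‖² ≤ (1 + c²) ‖v − P_U v‖². -/

import Mathlib

set_option synthInstance.maxHeartbeats 1000000
set_option maxHeartbeats 1000000

/-- The operator norm of (the restriction to `s` of) a map `f`, i.e. the least
nonnegative constant `c` such that `‖f v‖ ≤ c * ‖v‖` for all `v ∈ s`. -/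
noncomputable def opNormOn {V W : Type*} [SeminormedAddCommGroup V] [SeminormedAddCommGroup W]
    (f : V → W) (s : Set V) : ℝ :=
  sInf {c : ℝ | 0 ≤ c ∧ ∀ v ∈ s, ‖f v‖ ≤ c * ‖v‖}

private lemma opNormOn_spec {V W : Type*} [NormedAddCommGroup V] [NormedAddCommGroup W]
    (f : V → W) (s : Set V)
    (hne : ∃ c : ℝ, 0 ≤ c ∧ ∀ v ∈ s, ‖f v‖ ≤ c * ‖v‖) :
    0 ≤ opNormOn f s ∧ ∀ v ∈ s, ‖f v‖ ≤ opNormOn f s * ‖v‖ := by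
  have hbdd : BddBelow {c : ℝ | 0 ≤ c ∧ ∀ v ∈ s, ‖f v‖ ≤ c * ‖v‖} :=
    ⟨0, fun c hc => hc.1⟩
  constructor
  · exact le_csInf hne (fun c hc => hc.1)
  · intro v hv
    rcases eq_or_lt_of_le (norm_nonneg v) with h0 | h0
    · obtain ⟨c, hc0, hc⟩ := hne
      have := hc v hv
      rw [← h0] at this
      simp only [mul_zero] at this
      have : ‖f v‖ = 0 := le_antisymm this (norm_nonneg _)
      rw [this, ← h0, mul_zero]
    · rw [← div_le_iff₀ h0]
      exact le_csInf hne (fun c hc => (div_le_iff₀ h0).mpr (hc.2 v hv))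

/-- Pythagorean identity and quasi-optimality of the oblique projection `P`
onto `U` along `W ⊆ Ũ'` compared with the orthogonal projection `P_U`, on `Ũ`. -/
theorem stmt_5 {V : Type*} [NormedAddCommGroup V] [InnerProductSpace ℝ V] [CompleteSpace V]
    (Ut : Submodule ℝ V) (hUtc : IsClosed (Ut : Set V))
    (U : Submodule ℝ V) [FiniteDimensional ℝ U] (hle : U ≤ Ut)
    (W : Submodule ℝ (Ut →L[ℝ] ℝ)) [FiniteDimensional ℝ W]
    (hdim : Module.finrank ℝ W = Module.finrank ℝ U)
    (hnd : ∀ u : U, (∀ w : W, (w : Ut →L[ℝ] ℝ) (Submodule.inclusion hle u) = 0) → u = 0)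
    (P : V →ₗ[ℝ] V) (hPmem : ∀ v : V, P v ∈ U)
    (hPproj : ∀ v : V, ∀ hv : v ∈ Ut, ∀ w : W,
      (w : Ut →L[ℝ] ℝ) ⟨P v, hle (hPmem v)⟩ = (w : Ut →L[ℝ] ℝ) ⟨v, hv⟩) :
    ∀ c : ℝ,
      c = opNormOn (fun v : V => P v - (U.orthogonalProjectionOnto v : V)) (Ut : Set V) →
      ∀ v ∈ Ut,
        ‖v - P v‖ ^ 2 = ‖v - (U.orthogonalProjectionOnto v : V)‖ ^ 2
            + ‖(U.orthogonalProjectionOnto v : V) - P v‖ ^ 2 ∧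
        ‖v - P v‖ ^ 2 ≤ (1 + c ^ 2) * ‖v - (U.orthogonalProjectionOnto v : V)‖ ^ 2 := by
  classical
  -- Step 1 : P fixes U
  have hPfix : ∀ u : V, u ∈ U → P u = u := by
    intro u hu
    have hsub : P u - u ∈ U := U.sub_mem (hPmem u) hu
    have h0 : (⟨P u - u, hsub⟩ : U) = 0 := by
      apply hnd
      intro w
      have h1 := hPproj u (hle hu) w
      have h2 : (Submodule.inclusion hle (⟨P u - u, hsub⟩ : U)) =
          (⟨P u, hle (hPmem u)⟩ : Ut) - ⟨u, hle hu⟩ := rfl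
      rw [h2, map_sub, h1, sub_self]
    have : P u - u = 0 := congrArg Subtype.val h0
    exact sub_eq_zero.mp this
  -- Step 2 : P is bounded on Ut
  have hbound : ∃ C : ℝ, 0 ≤ C ∧ ∀ v ∈ Ut, ‖P v‖ ≤ C * ‖v‖ := by
    set n := Module.finrank ℝ W with hn
    haveI : Module.Free ℝ W := Module.Free.of_divisionRing ℝ W
    let b : Module.Basis (Fin n) ℝ W := Module.finBasis ℝ W
    let g : U →ₗ[ℝ] (Fin n → ℝ) :=
      LinearMap.pi (fun i => ((b i : Ut →L[ℝ] ℝ) : Ut →ₗ[ℝ] ℝ).comp (Submodule.inclusion hle))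
    have hginj : Function.Injective g := by
      rw [← LinearMap.ker_eq_bot, LinearMap.ker_eq_bot']
      intro u hu
      apply hnd
      intro w
      let ev : W →ₗ[ℝ] ℝ :=
        { toFun := fun w => (w : Ut →L[ℝ] ℝ) (Submodule.inclusion hle u)
          map_add' := fun a b => rfl
          map_smul' := fun a b => rfl }
      have hev : ev = 0 := by
        apply b.ext
        intro i
        have : g u i = 0 := by rw [hu]; rfl
        simpa [ev, g] using this
      have := congrArg (fun f : W →ₗ[ℝ] ℝ => f w) hev
      simpa [ev] using this
    have hrank : Module.finrank ℝ U = Module.finrank ℝ (Fin n → ℝ) := by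
      rw [Module.finrank_fin_fun]
      omega
    let geq : U ≃ₗ[ℝ] (Fin n → ℝ) := g.linearEquivOfInjective hginj hrank
    let h : Ut →L[ℝ] (Fin n → ℝ) := ContinuousLinearMap.pi (fun i => (b i : Ut →L[ℝ] ℝ))
    let Q : Ut →L[ℝ] V :=
      (U.subtypeL.comp (LinearMap.toContinuousLinearMap geq.symm.toLinearMap)).comp h
    have hQ : ∀ v : V, ∀ hv : v ∈ Ut, Q ⟨v, hv⟩ = P v := by
      intro v hv
      have key : geq ⟨P v, hPmem v⟩ = h ⟨v, hv⟩ := by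
        funext i
        have := hPproj v hv (b i)
        exact this
      have : geq.symm (h ⟨v, hv⟩) = ⟨P v, hPmem v⟩ := by
        rw [← key, LinearEquiv.symm_apply_apply]
      simp [Q, this]
    refine ⟨‖Q‖, Q.opNorm_nonneg, fun v hv => ?_⟩
    calc ‖P v‖ = ‖Q ⟨v, hv⟩‖ := by rw [hQ v hv]
      _ ≤ ‖Q‖ * ‖(⟨v, hv⟩ : Ut)‖ := Q.le_opNorm _
      _ = ‖Q‖ * ‖v‖ := rfl
  -- Step 3 : the set defining opNormOn is nonempty
  obtain ⟨C, hC0, hC⟩ := hbound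
  have hne : ∃ c : ℝ, 0 ≤ c ∧ ∀ v ∈ (Ut : Set V),
      ‖P v - (U.orthogonalProjectionOnto v : V)‖ ≤ c * ‖v‖ := by
    refine ⟨C + 1, by linarith, fun v hv => ?_⟩
    have h1 : ‖(U.orthogonalProjectionOnto v : V)‖ ≤ ‖v‖ := by
      calc ‖(U.orthogonalProjectionOnto v : V)‖ = ‖U.orthogonalProjectionOnto v‖ := rfl
        _ ≤ ‖U.orthogonalProjectionOnto‖ * ‖v‖ := (U.orthogonalProjectionOnto).le_opNorm v
        _ ≤ 1 * ‖v‖ := by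
            apply mul_le_mul_of_nonneg_right (Submodule.orthogonalProjectionOnto_norm_le U) (norm_nonneg v)
        _ = ‖v‖ := one_mul _
    calc ‖P v - (U.orthogonalProjectionOnto v : V)‖
        ≤ ‖P v‖ + ‖(U.orthogonalProjectionOnto v : V)‖ := norm_sub_le _ _
      _ ≤ C * ‖v‖ + ‖v‖ := add_le_add (hC v hv) h1
      _ = (C + 1) * ‖v‖ := by ring
  obtain ⟨hc0, hcb⟩ := opNormOn_spec _ _ hne
  intro c hc v hv
  rw [hc]
  set pv : V := (U.orthogonalProjectionOnto v : V) with hpv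
  -- Pythagoras
  have horth : @inner ℝ V _ (v - pv) (pv - P v) = 0 := by
    have hmem : pv - P v ∈ U := U.sub_mem (U.orthogonalProjectionOnto v).2 (hPmem v)
    have := Submodule.sub_starProjection_mem_orthogonal (K := U) v
    have h := this _ hmem
    rw [real_inner_comm] at h
    exact h
  have hpyth : ‖v - P v‖ ^ 2 = ‖v - pv‖ ^ 2 + ‖pv - P v‖ ^ 2 := by
    have : v - P v = (v - pv) + (pv - P v) := by abel
    rw [this, norm_add_sq_real, horth]
    ring
  refine ⟨hpyth, ?_⟩
  -- bound ‖pv - P v‖ ≤ opNormOn * ‖v - pv‖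
  have hsubmem : v - pv ∈ Ut := Ut.sub_mem hv (hle (U.orthogonalProjectionOnto v).2)
  have hfix : P (v - pv) - (U.orthogonalProjectionOnto (v - pv) : V) = P v - pv := by
    have hP : P (v - pv) = P v - pv := by
      rw [map_sub, hPfix pv (U.orthogonalProjectionOnto v).2]
    have hO : U.orthogonalProjectionOnto (v - pv) = 0 :=
      Submodule.orthogonalProjectionOnto_apply_of_mem_orthogonal
        (Submodule.sub_starProjection_mem_orthogonal (K := U) v)
    rw [hP, hO]
    simp
  have hkey : ‖pv - P v‖ ≤ opNormOn (fun v : V => P v - (U.orthogonalProjectionOnto v : V))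
      (Ut : Set V) * ‖v - pv‖ := by
    have := hcb (v - pv) hsubmem
    rw [hfix] at this
    rwa [norm_sub_rev (P v) pv] at this
  have h1 : (0:ℝ) ≤ ‖v - pv‖ := norm_nonneg _
  have h2 : (0:ℝ) ≤ ‖pv - P v‖ := norm_nonneg _
  nlinarith [sq_nonneg (‖v - pv‖), hkey, hpyth]
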